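/- Let S consist of 2n points given as n pairs {p_i, q_i} in a metric space, let T be a minimum spanning tree of S, let h be a maximum-weight edge of T, and let H_1, H_2 be the vertex sets of the two components of T after removing h. If some pair has both of its points in H_1 or both in H_2, then every feasible coloring S = R ∪ B satisfies max(btCost(R), btCost(B)) ≥ w(h), where w(h) is the length of the edge h. -/

import Mathlib

variable {α : Type*} [MetricSpace α] [DecidableEq α]

/-- Two points are connected via the edge set `E` (edges usable in both directions). -/
def EdgeConn (E : Finset (α × α)) (x y : α) : Prop :=
  Relation.ReflTransGen (fun a b => (a, b) ∈ E ∨ (b, a) ∈ E) x y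

/-- `E` is (the edge set of) a spanning tree of the complete graph on the finite
point set `X`. -/
def IsSpanningTreeOn (X : Finset α) (E : Finset (α × α)) : Prop :=
  (∀ e ∈ E, e.1 ∈ X ∧ e.2 ∈ X) ∧ E.card + 1 = X.card ∧
    ∀ x ∈ X, ∀ y ∈ X, EdgeConn E x y

/-- The bottleneck spanning tree cost of `X`: the least `c ≥ 0` such that some
spanning tree on `X` has all edge lengths at most `c`. -/
noncomputable def btCost (X : Finset α) : ℝ :=
  sInf {c | 0 ≤ c ∧ ∃ E : Finset (α × α), IsSpanningTreeOn X E ∧ ∀ e ∈ E, dist e.1 e.2 ≤ c}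

/-- `S` consists of `n` pairs `{pts (i, false), pts (i, true)}`. Let `T` be
a minimum spanning tree of `S` (minimizing total edge length), `h` a maximum-weight edge
of `T`, and `H₁, H₂` the vertex sets of the two components of `T` after removing `h`.
If some pair has both of its points in `H₁` or both in `H₂`, then every feasible coloring
`S = R ∪ B` satisfies `max (btCost R) (btCost B) ≥ dist h.1 h.2`. -/
theorem bottleneck_lower_bound_heaviest_edge
    (n : ℕ) (hn : 1 ≤ n)
    (pts : Fin n × Bool → α) (hinj : Function.Injective pts)
    (S : Finset α) (hS : S = Finset.image pts Finset.univ)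
    (T : Finset (α × α)) (hT : IsSpanningTreeOn S T)
    (hTmin : ∀ E : Finset (α × α), IsSpanningTreeOn S E →
      (∑ e ∈ T, dist e.1 e.2) ≤ ∑ e ∈ E, dist e.1 e.2)
    (h : α × α) (hh : h ∈ T) (hmax : ∀ e ∈ T, dist e.1 e.2 ≤ dist h.1 h.2)
    (H₁ H₂ : Finset α) (hpart : H₁ ∪ H₂ = S) (hdisj : Disjoint H₁ H₂)
    (hne1 : H₁.Nonempty) (hne2 : H₂.Nonempty)
    (hcomp : ∀ x ∈ S, ∀ y ∈ S,
      EdgeConn (T.erase h) x y ↔ ((x ∈ H₁ ∧ y ∈ H₁) ∨ (x ∈ H₂ ∧ y ∈ H₂)))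
    (hpair : ∃ i : Fin n, (pts (i, false) ∈ H₁ ∧ pts (i, true) ∈ H₁) ∨
                          (pts (i, false) ∈ H₂ ∧ pts (i, true) ∈ H₂))
    (σ : Fin n → Bool)
    (R B : Finset α)
    (hR : R = Finset.image (fun i => pts (i, σ i)) Finset.univ)
    (hB : B = Finset.image (fun i => pts (i, !(σ i))) Finset.univ) :
    dist h.1 h.2 ≤ max (btCost R) (btCost B) := by
  have hsub1 : H₁ ⊆ S := hpart ▸ Finset.subset_union_left
  have hsub2 : H₂ ⊆ S := hpart ▸ Finset.subset_union_right
  have hSmem : ∀ x ∈ S, x ∈ H₁ ∨ x ∈ H₂ := by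
    intro x hx
    rw [← hpart] at hx
    exact Finset.mem_union.mp hx
  have hnb : ∀ x, x ∈ H₁ → x ∉ H₂ := fun _ hx => Finset.disjoint_left.mp hdisj hx
  -- cut property: every edge crossing the cut has length ≥ dist h.1 h.2
  have hcut : ∀ a ∈ H₁, ∀ b ∈ H₂, dist h.1 h.2 ≤ dist a b := by
    intro a ha b hb
    have haS : a ∈ S := hsub1 ha
    have hbS : b ∈ S := hsub2 hb
    have hab_not : (a, b) ∉ T.erase h := by
      intro hmem
      have hc : EdgeConn (T.erase h) a b := Relation.ReflTransGen.single (Or.inl hmem)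
      rcases (hcomp a haS b hbS).mp hc with ⟨_, h2⟩ | ⟨h1, _⟩
      · exact hnb b h2 hb
      · exact hnb a ha h1
    have hST' : IsSpanningTreeOn S (insert (a, b) (T.erase h)) := by
      refine ⟨?_, ?_, ?_⟩
      · intro e he
        rcases Finset.mem_insert.mp he with rfl | he'
        · exact ⟨haS, hbS⟩
        · exact hT.1 e (Finset.mem_of_mem_erase he')
      · rw [Finset.card_insert_of_notMem hab_not, Finset.card_erase_of_mem hh]
        have hc := hT.2.1
        have hpos : 0 < T.card := Finset.card_pos.mpr ⟨h, hh⟩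
        omega
      · have hmono : ∀ x y, EdgeConn (T.erase h) x y →
            EdgeConn (insert (a, b) (T.erase h)) x y := by
          intro x y hxy
          exact Relation.ReflTransGen.mono (fun u v (huv : (u, v) ∈ T.erase h ∨ (v, u) ∈ T.erase h) =>
            huv.imp Finset.mem_insert_of_mem Finset.mem_insert_of_mem) x y hxy
        have hedge : EdgeConn (insert (a, b) (T.erase h)) a b :=
          Relation.ReflTransGen.single (Or.inl (Finset.mem_insert_self _ _))
        have hedge' : EdgeConn (insert (a, b) (T.erase h)) b a :=
          Relation.ReflTransGen.single (Or.inr (Finset.mem_insert_self _ _))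
        intro x hx y hy
        rcases hSmem x hx with hx1 | hx2 <;> rcases hSmem y hy with hy1 | hy2
        · exact hmono _ _ ((hcomp x hx y hy).mpr (Or.inl ⟨hx1, hy1⟩))
        · exact ((hmono _ _ ((hcomp x hx a haS).mpr (Or.inl ⟨hx1, ha⟩))).trans hedge).trans
            (hmono _ _ ((hcomp b hbS y hy).mpr (Or.inr ⟨hb, hy2⟩)))
        · exact ((hmono _ _ ((hcomp x hx b hbS).mpr (Or.inr ⟨hx2, hb⟩))).trans hedge').trans
            (hmono _ _ ((hcomp a haS y hy).mpr (Or.inl ⟨ha, hy1⟩)))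
        · exact hmono _ _ ((hcomp x hx y hy).mpr (Or.inr ⟨hx2, hy2⟩))
    have hmin := hTmin _ hST'
    rw [Finset.sum_insert hab_not] at hmin
    have hsum : ∑ e ∈ T.erase h, dist e.1 e.2 + dist h.1 h.2 = ∑ e ∈ T, dist e.1 e.2 :=
      Finset.sum_erase_add _ _ hh
    linarith
  -- crossing edge: a connection from H₁ to H₂ inside S uses a crossing edge
  have hcross : ∀ (E : Finset (α × α)), (∀ e ∈ E, e.1 ∈ S ∧ e.2 ∈ S) →
      ∀ x y, EdgeConn E x y → x ∈ H₁ → y ∈ H₂ →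
      ∃ u v, ((u, v) ∈ E ∨ (v, u) ∈ E) ∧ u ∈ H₁ ∧ v ∈ H₂ := by
    intro E hES x y hconn
    induction hconn with
    | refl => intro hx hy; exact absurd hy (hnb _ hx)
    | @tail b c hpath step ih =>
      intro hx hy
      have hbS : b ∈ S := by
        rcases step with hm | hm
        · exact (hES _ hm).1
        · exact (hES _ hm).2
      rcases hSmem b hbS with hb1 | hb2
      · exact ⟨b, c, step, hb1, hy⟩
      · exact ih hx hb2
  -- btCost lower bound for any X ⊆ S meeting both sides
  have hbt : ∀ X : Finset α, X ⊆ S → ∀ x ∈ X, ∀ y ∈ X, x ∈ H₁ → y ∈ H₂ →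
      dist h.1 h.2 ≤ btCost X := by
    intro X hXS x hxX y hyX hx1 hy2
    apply le_csInf
    · -- nonempty: star tree centered at x
      refine ⟨∑ e ∈ (X.erase x).image (fun z => (x, z)), dist e.1 e.2,
        Finset.sum_nonneg (fun e _ => dist_nonneg),
        (X.erase x).image (fun z => (x, z)), ⟨?_, ?_, ?_⟩, ?_⟩
      · intro e he
        obtain ⟨z, hz, rfl⟩ := Finset.mem_image.mp he
        exact ⟨hxX, Finset.mem_of_mem_erase hz⟩
      · rw [Finset.card_image_of_injective _ (fun z1 z2 hz => by simpa using hz)]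
        exact Finset.card_erase_add_one hxX
      · have step : ∀ w ∈ X, EdgeConn ((X.erase x).image (fun z => (x, z))) x w := by
          intro w hw
          by_cases hwx : w = x
          · subst hwx; exact Relation.ReflTransGen.refl
          · exact Relation.ReflTransGen.single (Or.inl (Finset.mem_image.mpr
              ⟨w, Finset.mem_erase.mpr ⟨hwx, hw⟩, rfl⟩))
        have back : ∀ w ∈ X, EdgeConn ((X.erase x).image (fun z => (x, z))) w x := by
          intro w hw
          by_cases hwx : w = x
          · subst hwx; exact Relation.ReflTransGen.refl
          · exact Relation.ReflTransGen.single (Or.inr (Finset.mem_image.mpr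
              ⟨w, Finset.mem_erase.mpr ⟨hwx, hw⟩, rfl⟩))
        intro u hu v hv
        exact (back u hu).trans (step v hv)
      · intro e he
        exact Finset.single_le_sum (fun e _ => dist_nonneg) he
    · rintro c ⟨hc0, E, hE, hEle⟩
      obtain ⟨u, v, hm, hu, hv⟩ := hcross E
        (fun e he => ⟨hXS (hE.1 e he).1, hXS (hE.1 e he).2⟩)
        x y (hE.2.2 x hxX y hyX) hx1 hy2
      have h1 := hcut u hu v hv
      rcases hm with hm | hm
      · exact h1.trans (hEle _ hm)
      · have h2 : dist u v ≤ c := by rw [dist_comm]; exact hEle _ hm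
        exact h1.trans h2
  -- assemble
  obtain ⟨i, hi⟩ := hpair
  have hRmem : ∀ j : Fin n, pts (j, σ j) ∈ R :=
    fun j => hR ▸ Finset.mem_image.mpr ⟨j, Finset.mem_univ _, rfl⟩
  have hBmem : ∀ j : Fin n, pts (j, !σ j) ∈ B :=
    fun j => hB ▸ Finset.mem_image.mpr ⟨j, Finset.mem_univ _, rfl⟩
  have hRS : R ⊆ S := by
    intro z hz
    rw [hR] at hz
    obtain ⟨j, _, rfl⟩ := Finset.mem_image.mp hz
    rw [hS]; exact Finset.mem_image.mpr ⟨(j, σ j), Finset.mem_univ _, rfl⟩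
  have hBS : B ⊆ S := by
    intro z hz
    rw [hB] at hz
    obtain ⟨j, _, rfl⟩ := Finset.mem_image.mp hz
    rw [hS]; exact Finset.mem_image.mpr ⟨(j, !σ j), Finset.mem_univ _, rfl⟩
  rcases hi with ⟨hif, hit⟩ | ⟨hif, hit⟩
  · -- pair i entirely in H₁; pick a point of H₂
    obtain ⟨z, hz2⟩ := hne2
    have hzS : z ∈ S := hsub2 hz2
    rw [hS] at hzS
    obtain ⟨⟨j, b⟩, _, rfl⟩ := Finset.mem_image.mp hzS
    have hiH : ∀ c : Bool, pts (i, c) ∈ H₁ := by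
      intro c; cases c
      · exact hif
      · exact hit
    by_cases hb : b = σ j
    · subst hb
      have hd : dist h.1 h.2 ≤ btCost R :=
        hbt R hRS _ (hRmem i) _ (hRmem j) (hiH _) hz2
      exact hd.trans (le_max_left _ _)
    · have hb' : b = !σ j := by revert hb; cases b <;> cases σ j <;> decide
      subst hb'
      have hd : dist h.1 h.2 ≤ btCost B :=
        hbt B hBS _ (hBmem i) _ (hBmem j) (hiH _) hz2
      exact hd.trans (le_max_right _ _)
  · -- pair i entirely in H₂; pick a point of H₁
    obtain ⟨z, hz1⟩ := hne1
    have hzS : z ∈ S := hsub1 hz1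
    rw [hS] at hzS
    obtain ⟨⟨j, b⟩, _, rfl⟩ := Finset.mem_image.mp hzS
    have hiH : ∀ c : Bool, pts (i, c) ∈ H₂ := by
      intro c; cases c
      · exact hif
      · exact hit
    by_cases hb : b = σ j
    · subst hb
      have hd : dist h.1 h.2 ≤ btCost R :=
        hbt R hRS _ (hRmem j) _ (hRmem i) hz1 (hiH _)
      exact hd.trans (le_max_left _ _)
    · have hb' : b = !σ j := by revert hb; cases b <;> cases σ j <;> decide
      subst hb'
      have hd : dist h.1 h.2 ≤ btCost B :=
        hbt B hBS _ (hBmem j) _ (hBmem i) hz1 (hiH _)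
      exact hd.trans (le_max_right _ _)
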